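/- In the braid group B_n, the Birman-Ko-Lee band generator a_{ts} := (a_{t-1} a_{t-2} ... a_{s+1}) a_s (a_{s+1}^{-1} ... a_{t-2}^{-1} a_{t-1}^{-1}) satisfies a_{ts} a_{sr} = a_{tr} a_{ts} for all n ≥ t > s > r ≥ 1, where a_i are the Artin generators. -/
import Mathlib


/-- `descProd a s k` is the product `a (s+k) * a (s+k-1) * ... * a (s+1)`. -/
def descProd {G : Type*} [Group G] (a : ℕ → G) (s : ℕ) : ℕ → G
  | 0 => 1
  | k + 1 => a (s + k + 1) * descProd a s k

/-- The Birman-Ko-Lee band generator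
`a_{ts} = (a_{t-1} a_{t-2} ⋯ a_{s+1}) a_s (a_{s+1}⁻¹ ⋯ a_{t-2}⁻¹ a_{t-1}⁻¹)`. -/
def band {G : Type*} [Group G] (a : ℕ → G) (t s : ℕ) : G :=
  descProd a s (t - s - 1) * a s * (descProd a s (t - s - 1))⁻¹

lemma descProd_split {G : Type*} [Group G] (a : ℕ → G) (r s : ℕ) (h : r < s) :
    ∀ m, descProd a r (s - r + m) = descProd a s m * a s * descProd a r (s - r - 1) := by
  intro m
  induction m with
  | zero =>
    have h1 : s - r + 0 = (s - r - 1) + 1 := by omega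
    rw [h1]
    simp only [descProd]
    have h2 : r + (s - r - 1) + 1 = s := by omega
    rw [h2, one_mul]
  | succ m ih =>
    have h1 : s - r + (m + 1) = (s - r + m) + 1 := by omega
    rw [h1]
    simp only [descProd]
    have h2 : r + (s - r + m) + 1 = s + m + 1 := by omega
    rw [h2, ih]; group

lemma commute_descProd {G : Type*} [Group G] (a : ℕ → G) (s : ℕ) (g : G) :
    ∀ k, (∀ j, s + 1 ≤ j → j ≤ s + k → Commute g (a j)) → Commute g (descProd a s k) := by
  intro k
  induction k with
  | zero => intro _; exact Commute.one_right g
  | succ k ih =>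
    intro h
    simp only [descProd]
    exact (h (s + k + 1) (by omega) (by omega)).mul_right
      (ih fun j hj1 hj2 => h j hj1 (by omega))

theorem band_mul_band_eq_band_mul_band {G : Type*} [Group G] (n : ℕ) (a : ℕ → G)
    (hbraid : ∀ i, 1 ≤ i → i + 1 ≤ n - 1 →
      a i * a (i + 1) * a i = a (i + 1) * a i * a (i + 1))
    (hcomm : ∀ i j, 1 ≤ i → i + 2 ≤ j → j ≤ n - 1 → a i * a j = a j * a i) :
    ∀ t s r, t ≤ n → s < t → r < s → 1 ≤ r →
      band a t s * band a s r = band a t r * band a t s := by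
  intro t s r htn hst hrs hr
  set D := descProd a s (t - s - 1) with hD
  set E := descProd a r (s - r - 1) with hE
  have hsplit : descProd a r (t - r - 1) = D * a s * E := by
    have h1 : t - r - 1 = s - r + (t - s - 1) := by omega
    rw [h1]
    exact descProd_split a r s hrs (t - s - 1)
  -- every generator appearing in D commutes with band a s r
  have hDj : ∀ j, s + 1 ≤ j → j ≤ t - 1 → Commute (a j) (E * a r * E⁻¹) := by
    intro j hj1 hj2
    have hjn : j ≤ n - 1 := by omega
    have c1 : Commute (a j) E := by
      apply commute_descProd
      intro i hi1 hi2
      have : r + (s - r - 1) = s - 1 := by omega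
      exact ((hcomm i j (by omega) (by omega) hjn : Commute (a i) (a j))).symm
    have c2 : Commute (a j) (a r) :=
      ((hcomm r j (by omega) (by omega) hjn : Commute (a r) (a j))).symm
    exact (c1.mul_right c2).mul_right c1.inv_right
  have hkey : Commute (E * a r * E⁻¹) D := by
    apply commute_descProd
    intro j hj1 hj2
    exact (hDj j hj1 (by omega)).symm
  have h2 : D⁻¹ * (E * a r * E⁻¹) = (E * a r * E⁻¹) * D⁻¹ := hkey.inv_right.eq.symm
  show D * a s * D⁻¹ * (E * a r * E⁻¹) =
    descProd a r (t - r - 1) * a r * (descProd a r (t - r - 1))⁻¹ * (D * a s * D⁻¹)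
  rw [hsplit]
  calc D * a s * D⁻¹ * (E * a r * E⁻¹)
      = D * a s * (D⁻¹ * (E * a r * E⁻¹)) := by group
    _ = D * a s * (E * a r * E⁻¹ * D⁻¹) := by rw [h2]
    _ = D * a s * E * a r * (D * a s * E)⁻¹ * (D * a s * D⁻¹) := by group
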